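/- arXiv:1902.05465 — 12 statements merged into one kernel-verified Lean document; each statement's English description precedes it below -/
import Mathlib

section
/- Chain rule for change actions: let A, B, C be change actions with change monoids ΔA, ΔB, ΔC and actions ⊕. If df : A → ΔA → ΔB is a derivative of f : A → B and dg : B → ΔB → ΔC is a derivative of g : B → C, then the function (a, δ) ↦ dg (f a) (df a δ) is a derivative of g ∘ f : A → C. -/
/-- `act : A → Δ → A` is a change action structure on `A` for the additive
monoid `Δ`: the monoid acts on `A` via `act`. -/
def IsChangeAction {A Δ : Type*} [AddMonoid Δ] (act : A → Δ → A) : Prop :=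
  (∀ a, act a 0 = a) ∧ ∀ (a : A) (δ δ' : Δ), act a (δ + δ') = act (act a δ) δ'

/-- `df` is a derivative of `f` with respect to the change actions `actA`, `actB`. -/
def IsDerivative {A ΔA B ΔB : Type*} [AddMonoid ΔA] [AddMonoid ΔB]
    (actA : A → ΔA → A) (actB : B → ΔB → B) (f : A → B) (df : A → ΔA → ΔB) : Prop :=
  ∀ a δ, f (actA a δ) = actB (f a) (df a δ)

/-- `df` is a regular derivative candidate: it maps zero changes to zero and is
additive in the sense `df a (δ + δ') = df a δ + df (a ⊕ δ) δ'`. -/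
def IsRegularDerivative {A ΔA ΔB : Type*} [AddMonoid ΔA] [AddMonoid ΔB]
    (actA : A → ΔA → A) (df : A → ΔA → ΔB) : Prop :=
  (∀ a, df a 0 = 0) ∧ ∀ (a : A) (δ δ' : ΔA), df a (δ + δ') = df a δ + df (actA a δ) δ'

/-- Chain rule for change actions: if `df` is a derivative of `f : A → B` and
`dg` is a derivative of `g : B → C`, then `(a, δ) ↦ dg (f a) (df a δ)` is a
derivative of `g ∘ f`. -/
theorem chain_rule {A ΔA B ΔB C ΔC : Type*}
    [AddMonoid ΔA] [AddMonoid ΔB] [AddMonoid ΔC]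
    (actA : A → ΔA → A) (actB : B → ΔB → B) (actC : C → ΔC → C)
    (hA : IsChangeAction actA) (hB : IsChangeAction actB) (hC : IsChangeAction actC)
    (f : A → B) (g : B → C) (df : A → ΔA → ΔB) (dg : B → ΔB → ΔC)
    (hdf : IsDerivative actA actB f df) (hdg : IsDerivative actB actC g dg) :
    IsDerivative actA actC (g ∘ f) (fun a δ => dg (f a) (df a δ)) := by
  intro a δ
  simp [Function.comp, hdf a δ, hdg (f a) (df a δ)]
end

section
/- If a function f : A → B between change actions is differentiable and has a unique derivative df (i.e. any function df' : A → ΔA → ΔB satisfying the derivative condition for f equals df), then df is regular: df a 0 = 0 and df a (δ + δ') = df a δ + df (a ⊕ δ) δ' for all a : A and δ, δ' : ΔA. -/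
/-- If `f` is differentiable and `df` is its unique derivative, then `df` is regular. -/
theorem unique_derivative_regular {A ΔA B ΔB : Type*}
    [AddMonoid ΔA] [AddMonoid ΔB]
    (actA : A → ΔA → A) (actB : B → ΔB → B)
    (hA : IsChangeAction actA) (hB : IsChangeAction actB)
    (f : A → B) (df : A → ΔA → ΔB)
    (hdf : IsDerivative actA actB f df)
    (huniq : ∀ df' : A → ΔA → ΔB, IsDerivative actA actB f df' → df' = df) :
    IsRegularDerivative actA df := by
  classical
  constructor
  · intro a
    set df' : A → ΔA → ΔB := fun x μ => if x = a ∧ μ = 0 then 0 else df x μ with hdf'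
    have hder : IsDerivative actA actB f df' := by
      intro x μ
      by_cases h : x = a ∧ μ = 0
      · obtain ⟨hx, hμ⟩ := h
        subst hx; subst hμ
        simp [hdf', hA.1, hB.1]
      · simp [hdf', h, hdf x μ]
    have := congrFun (congrFun (huniq df' hder) a) 0
    simpa [hdf'] using this.symm
  · intro a δ δ'
    set dfn : A → ΔA → ΔB := fun x μ =>
      if x = a ∧ μ = δ + δ' then df a δ + df (actA a δ) δ' else df x μ with hdfn
    have hder : IsDerivative actA actB f dfn := by
      intro x μ
      by_cases h : x = a ∧ μ = δ + δ'
      · obtain ⟨hx, hμ⟩ := h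
        subst hx; subst hμ
        have : dfn x (δ + δ') = df x δ + df (actA x δ) δ' := by simp [hdfn]
        rw [this, hA.2, hdf, hdf, ← hB.2]
      · simp [hdfn, h, hdf x μ]
    have := congrFun (congrFun (huniq dfn hder) a) (δ + δ')
    simpa [hdfn] using this.symm
end

section
/- The chain rule preserves regularity: let A, B, C be change actions, and let df and dg be regular derivatives of f : A → B and g : B → C respectively. Then the chain-rule derivative of g ∘ f given by (a, δ) ↦ dg (f a) (df a δ) is a regular derivative of g ∘ f. -/
/-- The chain rule preserves regularity. -/
theorem chain_rule_regular {A ΔA B ΔB C ΔC : Type*}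
    [AddMonoid ΔA] [AddMonoid ΔB] [AddMonoid ΔC]
    (actA : A → ΔA → A) (actB : B → ΔB → B) (actC : C → ΔC → C)
    (hA : IsChangeAction actA) (hB : IsChangeAction actB) (hC : IsChangeAction actC)
    (f : A → B) (g : B → C) (df : A → ΔA → ΔB) (dg : B → ΔB → ΔC)
    (hdf : IsDerivative actA actB f df) (hrf : IsRegularDerivative actA df)
    (hdg : IsDerivative actB actC g dg) (hrg : IsRegularDerivative actB dg) :
    IsDerivative actA actC (g ∘ f) (fun a δ => dg (f a) (df a δ)) ∧
    IsRegularDerivative actA (fun a δ => dg (f a) (df a δ)) := by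
  obtain ⟨hB0, hBadd⟩ := hB
  obtain ⟨hf0, hfadd⟩ := hrf
  obtain ⟨hg0, hgadd⟩ := hrg
  refine ⟨fun a δ => ?_, fun a => ?_, fun a δ δ' => ?_⟩
  · simp only [Function.comp]; rw [hdf a δ, hdg]
  · simp [hf0, hg0]
  · simp only [hfadd, hgadd, hdf a δ]
end

section
/- A function f : A → B between (the carriers of) change actions is differentiable if and only if it is monotone with respect to the reachability preorders, i.e. for all a, a' : A, if there exists δ : ΔA with a ⊕ δ = a', then there exists ε : ΔB with f a ⊕ ε = f a'. (The forward direction is direct; the converse uses the axiom of choice to assemble a derivative.) -/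
/-- A function between change actions is differentiable iff it is monotone with
respect to the reachability preorders. -/
theorem differentiable_iff_monotone {A ΔA B ΔB : Type*}
    [AddMonoid ΔA] [AddMonoid ΔB]
    (actA : A → ΔA → A) (actB : B → ΔB → B)
    (hA : IsChangeAction actA) (hB : IsChangeAction actB)
    (f : A → B) :
    (∃ df : A → ΔA → ΔB, IsDerivative actA actB f df) ↔
      ∀ a a' : A, (∃ δ : ΔA, actA a δ = a') → ∃ ε : ΔB, actB (f a) ε = f a' := by
  constructor
  · rintro ⟨df, hdf⟩ a a' ⟨δ, rfl⟩
    exact ⟨df a δ, (hdf a δ).symm⟩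
  · intro hmono
    refine ⟨fun a δ => (hmono a (actA a δ) ⟨δ, rfl⟩).choose, fun a δ => ?_⟩
    exact ((hmono a (actA a δ) ⟨δ, rfl⟩).choose_spec).symm
end

section
/- Partial derivatives: let A, B, C be change actions and give A × B the product change action structure (change monoid ΔA × ΔB componentwise, action (a, b) ⊕ (δa, δb) = (a ⊕ δa, b ⊕ δb)). If df is a regular derivative of f : A × B → C, then for all a : A, b : B, δa : ΔA, δb : ΔB: df ((a, b), (δa, δb)) = df ((a, b), (δa, 0)) + df ((a ⊕ δa, b), (0, δb)). -/
/-- The componentwise change action on a product. -/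
def prodAct {A ΔA B ΔB : Type*} (actA : A → ΔA → A) (actB : B → ΔB → B) :
    A × B → ΔA × ΔB → A × B :=
  fun p δ => (actA p.1 δ.1, actB p.2 δ.2)

/-- Partial derivatives: a regular derivative of `f : A × B → C` is the sum of
its two partial derivatives. -/
theorem partial_derivatives {A ΔA B ΔB C ΔC : Type*}
    [AddMonoid ΔA] [AddMonoid ΔB] [AddMonoid ΔC]
    (actA : A → ΔA → A) (actB : B → ΔB → B) (actC : C → ΔC → C)
    (hA : IsChangeAction actA) (hB : IsChangeAction actB) (hC : IsChangeAction actC)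
    (f : A × B → C) (df : A × B → ΔA × ΔB → ΔC)
    (hdf : IsDerivative (prodAct actA actB) actC f df)
    (hreg : IsRegularDerivative (prodAct actA actB) df) :
    ∀ (a : A) (b : B) (δa : ΔA) (δb : ΔB),
      df (a, b) (δa, δb) = df (a, b) (δa, 0) + df (actA a δa, b) (0, δb) := by
  intro a b δa δb
  have h := hreg.2 (a, b) (δa, 0) (0, δb)
  have e : ((δa, 0) : ΔA × ΔB) + (0, δb) = (δa, δb) := by
    simp [Prod.ext_iff]
  rw [e] at h
  rw [h]
  simp [prodAct, hB.1]
end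

section
/- Coproducts of change actions: let A, B, C be change actions. (1) The structure on the sum type A ⊕ B with change monoid ΔA × ΔB (componentwise addition and zero) and action (inl a) ⊕ (δa, δb) = inl (a ⊕ δa), (inr b) ⊕ (δa, δb) = inr (b ⊕ δb) is a change action. (2) The injections inl : A → A ⊕ B and inr : B → A ⊕ B have regular derivatives (a, δa) ↦ (δa, 0) and (b, δb) ↦ (0, δb) respectively. (3) If f₁ : A → C and f₂ : B → C have regular derivatives df₁ and df₂, then the copairing Sum.elim f₁ f₂ has a regular derivative dh given by dh (inl a) (δa, δb) = df₁ a δa and dh (inr b) (δa, δb) = df₂ b δb. -/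
/-- The change action on the sum type `A ⊕ B` with change monoid `ΔA × ΔB`. -/
def sumAct {A ΔA B ΔB : Type*} (actA : A → ΔA → A) (actB : B → ΔB → B) :
    A ⊕ B → ΔA × ΔB → A ⊕ B
  | Sum.inl a, δ => Sum.inl (actA a δ.1)
  | Sum.inr b, δ => Sum.inr (actB b δ.2)

/-- Coproducts of change actions: (1) `sumAct` is a change action on `A ⊕ B` with
change monoid `ΔA × ΔB`; (2) the injections have regular derivatives
`(a, δa) ↦ (δa, 0)` and `(b, δb) ↦ (0, δb)`; (3) the copairing of maps with
regular derivatives has a regular derivative given by case analysis. -/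
theorem coproduct_change_action {A ΔA B ΔB C ΔC : Type*}
    [AddMonoid ΔA] [AddMonoid ΔB] [AddMonoid ΔC]
    (actA : A → ΔA → A) (actB : B → ΔB → B) (actC : C → ΔC → C)
    (hA : IsChangeAction actA) (hB : IsChangeAction actB) (hC : IsChangeAction actC)
    (f₁ : A → C) (f₂ : B → C) (df₁ : A → ΔA → ΔC) (df₂ : B → ΔB → ΔC)
    (h₁ : IsDerivative actA actC f₁ df₁) (hr₁ : IsRegularDerivative actA df₁)
    (h₂ : IsDerivative actB actC f₂ df₂) (hr₂ : IsRegularDerivative actB df₂) :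
    IsChangeAction (sumAct actA actB) ∧
    (IsDerivative actA (sumAct actA actB) Sum.inl (fun _ δa => ((δa, 0) : ΔA × ΔB)) ∧
      IsRegularDerivative actA (fun (_ : A) (δa : ΔA) => ((δa, 0) : ΔA × ΔB))) ∧
    (IsDerivative actB (sumAct actA actB) Sum.inr (fun _ δb => ((0, δb) : ΔA × ΔB)) ∧
      IsRegularDerivative actB (fun (_ : B) (δb : ΔB) => ((0, δb) : ΔA × ΔB))) ∧
    (IsDerivative (sumAct actA actB) actC (Sum.elim f₁ f₂)
        (fun s δ => Sum.elim (fun a => df₁ a δ.1) (fun b => df₂ b δ.2) s) ∧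
      IsRegularDerivative (sumAct actA actB)
        (fun (s : A ⊕ B) (δ : ΔA × ΔB) =>
          Sum.elim (fun a => df₁ a δ.1) (fun b => df₂ b δ.2) s)) := by
  refine ⟨⟨?_, ?_⟩, ⟨?_, ?_, ?_⟩, ⟨?_, ?_, ?_⟩, ?_, ?_, ?_⟩ <;>
    first
    | (rintro (a | b) ⟨δ1, δ2⟩ <;> simp only [sumAct, Sum.elim_inl, Sum.elim_inr] <;>
        [exact h₁ a δ1; exact h₂ b δ2])
    | (rintro (a | b) ⟨δ1, δ2⟩ <;>
        simp [sumAct, hA.1, hB.1, hA.2, hB.2, hC.2, h₁, h₂, hr₁.1, hr₂.1, hr₁.2, hr₂.2])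
    | (rintro (a | b) <;> simp [sumAct, hA.1, hB.1, hr₁.1, hr₂.1])
    | (intro a δ; simp [sumAct])
    | (intro a; simp [sumAct])
    | (intros; simp [sumAct, Prod.ext_iff])
end

section
/- Stability is preserved by the chain rule: let A, B, C be change actions, let df be a stable derivative of f : A → B, and let dg be a stable derivative of g : B → C. Then the chain-rule derivative of g ∘ f, given by d(g∘f) a δ = dg (f a) (df a δ), is stable: dg (f (a ⊕ δ)) (df (a ⊕ δ) δ') = dg (f a) (df a δ') for all a : A and δ, δ' : ΔA. -/
/-- `df` is stable: changes to the base point do not affect its value. -/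
def IsStable {A ΔA ΔB : Type*} (actA : A → ΔA → A) (df : A → ΔA → ΔB) : Prop :=
  ∀ (a : A) (δ δ' : ΔA), df (actA a δ) δ' = df a δ'

/-- Stability is preserved by the chain rule. -/
theorem chain_rule_stable {A ΔA B ΔB C ΔC : Type*}
    [AddMonoid ΔA] [AddMonoid ΔB] [AddMonoid ΔC]
    (actA : A → ΔA → A) (actB : B → ΔB → B) (actC : C → ΔC → C)
    (hA : IsChangeAction actA) (hB : IsChangeAction actB) (hC : IsChangeAction actC)
    (f : A → B) (g : B → C) (df : A → ΔA → ΔB) (dg : B → ΔB → ΔC)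
    (hdf : IsDerivative actA actB f df) (hsf : IsStable actA df)
    (hdg : IsDerivative actB actC g dg) (hsg : IsStable actB dg) :
    IsStable actA (fun a δ => dg (f a) (df a δ)) := by
  intro a δ δ'
  simp only []
  rw [hdf a δ, hsg, hsf]
end

section
/- Regularity of derivatives of star monomials over a commutative Kleene algebra: let K be a Kleene algebra in which multiplication is commutative. For the polynomial p(x) = (x^(n+1) · c)∗ with derivative ∂p/∂x (x) = (x^(n+1) · c)∗ · (x^n · c), the regularity equation holds: for all n : ℕ and u, a, b, c : K, ((u+a+b)^(n+1) · c)∗ · ((u+a+b)^n · c) · (a + b) = ((u+a)^(n+1) · c)∗ · ((u+a)^n · c) · a + ((u+a+b)^(n+1) · c)∗ · ((u+a+b)^n · c) · b. -/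
open scoped Computability

section
variable {K : Type*} [KleeneAlgebra K]

private lemma hm {x y p q : K} (h1 : x ≤ y) (h2 : p ≤ q) : x * p ≤ y * q := by
  have h3 : x * p ≤ y * p := by
    have : x * p + y * p = y * p := by rw [← add_mul, add_eq_right_iff_le.2 h1]
    exact add_eq_right_iff_le.1 this
  have h4 : y * p ≤ y * q := by
    have : y * p + y * q = y * q := by rw [← mul_add, add_eq_right_iff_le.2 h2]
    exact add_eq_right_iff_le.1 this
  exact h3.trans h4

private lemma binom (hcomm : ∀ a b : K, a * b = b * a) (s b : K) :
    ∀ m : ℕ, ∃ q : K, (s + b) ^ m = s ^ m + b * q ∧ q * (s + b) ≤ (s + b) ^ m := by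
  have hlc : ∀ a b c : K, a * (b * c) = b * (a * c) := fun a b c => by
    rw [← mul_assoc, hcomm a b, mul_assoc]
  intro m
  induction m with
  | zero => exact ⟨0, by simp, by simp⟩
  | succ m ih =>
    obtain ⟨q, hq, hle⟩ := ih
    refine ⟨s ^ m + (s + b) * q, ?_, ?_⟩
    · rw [pow_succ, hq]
      simp only [pow_succ, mul_add, add_mul, mul_assoc, hlc, hcomm]
      abel
    · rw [pow_succ]
      calc (s ^ m + (s + b) * q) * (s + b)
          = s ^ m * (s + b) + (s + b) * (q * (s + b)) := by
            rw [add_mul, mul_assoc]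
        _ ≤ (s + b) ^ m * (s + b) + (s + b) * (s + b) ^ m := by
            have h1 : s ^ m * (s + b) ≤ (s + b) ^ m * (s + b) :=
              hm (pow_le_pow_left' (le_add_right le_rfl) m) le_rfl
            have h2 : (s + b) * (q * (s + b)) ≤ (s + b) * (s + b) ^ m := hm le_rfl hle
            exact add_le (h1.trans (le_add_right le_rfl)) (h2.trans (le_add_left le_rfl))
        _ = (s + b) ^ m * (s + b) := by rw [hcomm]; simp
        _ ≤ (s + b) ^ m * (s + b) := le_rfl
end

/-- Regularity of derivatives of star monomials over a commutative Kleene algebra. -/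
theorem kleene_star_monomial_regular {K : Type*} [KleeneAlgebra K]
    (hcomm : ∀ a b : K, a * b = b * a) (n : ℕ) (u a b c : K) :
    ((u + a + b) ^ (n + 1) * c)∗ * ((u + a + b) ^ n * c) * (a + b) =
      ((u + a) ^ (n + 1) * c)∗ * ((u + a) ^ n * c) * a +
        ((u + a + b) ^ (n + 1) * c)∗ * ((u + a + b) ^ n * c) * b := by
  have hlc : ∀ a b c : K, a * (b * c) = b * (a * c) := fun a b c => by
    rw [← mul_assoc, hcomm a b, mul_assoc]
  set s := u + a with hs
  set t := u + a + b with ht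
  have hts : t = s + b := rfl
  have hst : s ≤ t := le_add_right le_rfl
  have hat : a ≤ t := le_trans (le_add_left le_rfl) hst
  obtain ⟨q, hq, hqle⟩ := binom hcomm s b n
  obtain ⟨r, hr, hrle⟩ := binom hcomm s b (n + 1)
  rw [← hts] at hq hqle hr hrle
  set z := t ^ (n + 1) * c with hz
  set w := s ^ (n + 1) * c with hw
  have hwz : w ≤ z := hm (pow_le_pow_left' hst _) le_rfl
  have hzz : z∗ * z ≤ z∗ := kstar_mul_le_kstar
  -- z * C ≤ C for C the RHS-ish bound
  have key : z∗ * (t ^ n * c) * a ≤ w∗ * (s ^ n * c) * a + z∗ * (t ^ n * c) * b := by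
    set C := w∗ * (s ^ n * c) * a + z∗ * (t ^ n * c) * b with hC
    have hrca : r * c * (s ^ n * c * a) ≤ z * (t ^ n * c) := by
      have h1 : r * c * (s ^ n * c * a) = (r * a) * (s ^ n) * c * c := by
        simp only [mul_assoc, hlc, hcomm]
      have h2 : (r * a) * (s ^ n) * c * c ≤ (t ^ (n + 1)) * (t ^ n) * c * c := by
        refine hm (hm (hm ?_ (pow_le_pow_left' hst n)) le_rfl) le_rfl
        calc r * a ≤ r * t := hm le_rfl hat
          _ ≤ t ^ (n + 1) := hrle
      have h3 : (t ^ (n + 1)) * (t ^ n) * c * c = z * (t ^ n * c) := by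
        simp only [hz, mul_assoc, hlc, hcomm]
      calc r * c * (s ^ n * c * a) = r * a * s ^ n * c * c := h1
        _ ≤ t ^ (n + 1) * t ^ n * c * c := h2
        _ = z * (t ^ n * c) := h3
    have hzC : z * C ≤ C := by
      rw [hC, mul_add]
      refine add_le ?_ ?_
      · -- z * (w∗ * (s^n*c) * a) ≤ C, with z = w + b*r*c
        have hzdec : z = w + b * (r * c) := by rw [hz, hr, add_mul, mul_assoc]
        have hsplitz : z * (w∗ * (s ^ n * c) * a)
            = w * (w∗ * (s ^ n * c) * a) + b * (r * c) * (w∗ * (s ^ n * c) * a) := by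
          rw [hzdec, add_mul]
        rw [hsplitz]
        refine add_le ?_ ?_
        · -- w * (w∗ s^n c a) ≤ w∗ s^n c a
          have : w * (w∗ * (s ^ n * c) * a) = (w * w∗) * (s ^ n * c) * a := by
            simp only [mul_assoc]
          rw [this]
          refine le_trans (hm (hm mul_kstar_le_kstar le_rfl) le_rfl) ?_
          exact le_add_right le_rfl
        · -- b*(r*c) * (w∗ s^n c a) ≤ z∗ t^n c b
          refine le_trans ?_ (le_add_left le_rfl)
          have e1 : b * (r * c) * (w∗ * (s ^ n * c) * a)
              = w∗ * (r * c * (s ^ n * c * a)) * b := by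
            simp only [mul_assoc, hlc, hcomm]
          rw [e1]
          refine hm ?_ le_rfl
          calc w∗ * (r * c * (s ^ n * c * a)) ≤ z∗ * (z * (t ^ n * c)) :=
                hm (kstar_mono hwz) hrca
            _ = z∗ * z * (t ^ n * c) := (mul_assoc _ _ _).symm
            _ ≤ z∗ * (t ^ n * c) := hm hzz le_rfl
      · -- z * (z∗ t^n c b) ≤ z∗ t^n c b
        refine le_trans ?_ (le_add_left le_rfl)
        have : z * (z∗ * (t ^ n * c) * b) = (z * z∗) * (t ^ n * c) * b := by
          simp only [mul_assoc]
        rw [this]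
        exact hm (hm mul_kstar_le_kstar le_rfl) le_rfl
    -- split t^n = s^n + b*q
    have hsplit : z∗ * (t ^ n * c) * a
        = z∗ * (s ^ n * c) * a + z∗ * (q * a * c) * b := by
      rw [hq]
      simp only [add_mul, mul_add, mul_assoc, hlc, hcomm]
    rw [hsplit]
    refine add_le ?_ ?_
    · -- z∗ * (s^n c a) ≤ C  via kstar induction
      have e : z∗ * (s ^ n * c) * a = z∗ * (s ^ n * c * a) := by rw [mul_assoc]
      rw [e]
      refine kstar_mul_le ?_ hzC
      refine le_trans ?_ (le_add_right le_rfl)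
      calc s ^ n * c * a = 1 * (s ^ n * c) * a := by rw [one_mul]
        _ ≤ w∗ * (s ^ n * c) * a := hm (hm one_le_kstar le_rfl) le_rfl
    · -- z∗ * (q*a*c) * b ≤ z∗ t^n c b ≤ C
      refine le_trans ?_ (le_add_left le_rfl)
      refine hm (hm le_rfl ?_) le_rfl
      have : q * a * c ≤ t ^ n * c := by
        refine hm ?_ le_rfl
        exact (hm le_rfl hat).trans hqle
      exact this
  -- finish
  have expand : z∗ * (t ^ n * c) * (a + b)
      = z∗ * (t ^ n * c) * a + z∗ * (t ^ n * c) * b := by rw [mul_add]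
  rw [expand]
  apply le_antisymm
  · exact add_le (key.trans le_rfl) (le_add_left le_rfl)
  · refine add_le ?_ (le_add_left le_rfl)
    refine le_trans ?_ (le_add_right le_rfl)
    exact hm (hm (kstar_mono hwz) (hm (pow_le_pow_left' hst n) le_rfl)) le_rfl
end

section
/- Vertical composition of 2-cells between differential maps: let A, B be change actions, let f, g, h : A → B have regular derivatives df, dg, dh respectively, let U : A → ΔB be a 2-cell from (f, df) to (g, dg), and let V : A → ΔB be a 2-cell from (g, dg) to (h, dh). Then the function a ↦ U a + V a is a 2-cell from (f, df) to (h, dh): h a = f a ⊕ (U a + V a) for all a, and df a δ + (U (a ⊕ δ) + V (a ⊕ δ)) = (U a + V a) + dh a δ for all a, δ. -/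
/-- `U` is a 2-cell from `(f, df)` to `(g, dg)`. -/
def Is2Cell {A ΔA B ΔB : Type*} [AddMonoid ΔB]
    (actA : A → ΔA → A) (actB : B → ΔB → B)
    (f g : A → B) (df dg : A → ΔA → ΔB) (U : A → ΔB) : Prop :=
  (∀ a, g a = actB (f a) (U a)) ∧
  ∀ (a : A) (δ : ΔA), df a δ + U (actA a δ) = U a + dg a δ

/-- Vertical composition of 2-cells between differential maps. -/
theorem vertical_composition_2cells {A ΔA B ΔB : Type*}
    [AddMonoid ΔA] [AddMonoid ΔB]
    (actA : A → ΔA → A) (actB : B → ΔB → B)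
    (hA : IsChangeAction actA) (hB : IsChangeAction actB)
    (f g h : A → B) (df dg dh : A → ΔA → ΔB)
    (hdf : IsDerivative actA actB f df) (hrf : IsRegularDerivative actA df)
    (hdg : IsDerivative actA actB g dg) (hrg : IsRegularDerivative actA dg)
    (hdh : IsDerivative actA actB h dh) (hrh : IsRegularDerivative actA dh)
    (U V : A → ΔB)
    (hU : Is2Cell actA actB f g df dg U)
    (hV : Is2Cell actA actB g h dg dh V) :
    Is2Cell actA actB f h df dh (fun a => U a + V a) := by
  constructor
  · intro a
    rw [hV.1 a, hU.1 a, hB.2]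
  · intro a δ
    calc df a δ + (U (actA a δ) + V (actA a δ))
        = (df a δ + U (actA a δ)) + V (actA a δ) := by rw [add_assoc]
      _ = (U a + dg a δ) + V (actA a δ) := by rw [hU.2]
      _ = U a + (dg a δ + V (actA a δ)) := by rw [add_assoc]
      _ = U a + (V a + dh a δ) := by rw [hV.2]
      _ = (U a + V a) + dh a δ := by rw [add_assoc]
end

section
/- Horizontal composition of 2-cells between differential maps: let A, B, C be change actions; let f₁, f₂ : A → B have regular derivatives df₁, df₂ and let U be a 2-cell from (f₁, df₁) to (f₂, df₂); let g₁, g₂ : B → C have regular derivatives dg₁, dg₂ and let V be a 2-cell from (g₁, dg₁) to (g₂, dg₂). Then W : A → ΔC defined by W a = dg₁ (f₁ a) (U a) + V (f₂ a) is a 2-cell from (g₁ ∘ f₁, d(g₁∘f₁)) to (g₂ ∘ f₂, d(g₂∘f₂)), where d(gᵢ∘fᵢ) a δ = dgᵢ (fᵢ a) (dfᵢ a δ): that is, g₂ (f₂ a) = g₁ (f₁ a) ⊕ W a for all a, and dg₁ (f₁ a) (df₁ a δ) + W (a ⊕ δ) = W a + dg₂ (f₂ a) (df₂ a δ) for all a,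 δ. -/
/-- Horizontal composition of 2-cells between differential maps. -/
theorem horizontal_composition_2cells {A ΔA B ΔB C ΔC : Type*}
    [AddMonoid ΔA] [AddMonoid ΔB] [AddMonoid ΔC]
    (actA : A → ΔA → A) (actB : B → ΔB → B) (actC : C → ΔC → C)
    (hA : IsChangeAction actA) (hB : IsChangeAction actB) (hC : IsChangeAction actC)
    (f₁ f₂ : A → B) (df₁ df₂ : A → ΔA → ΔB)
    (hdf₁ : IsDerivative actA actB f₁ df₁) (hrf₁ : IsRegularDerivative actA df₁)
    (hdf₂ : IsDerivative actA actB f₂ df₂) (hrf₂ : IsRegularDerivative actA df₂)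
    (g₁ g₂ : B → C) (dg₁ dg₂ : B → ΔB → ΔC)
    (hdg₁ : IsDerivative actB actC g₁ dg₁) (hrg₁ : IsRegularDerivative actB dg₁)
    (hdg₂ : IsDerivative actB actC g₂ dg₂) (hrg₂ : IsRegularDerivative actB dg₂)
    (U : A → ΔB) (V : B → ΔC)
    (hU : Is2Cell actA actB f₁ f₂ df₁ df₂ U)
    (hV : Is2Cell actB actC g₁ g₂ dg₁ dg₂ V) :
    Is2Cell actA actC (g₁ ∘ f₁) (g₂ ∘ f₂)
      (fun a δ => dg₁ (f₁ a) (df₁ a δ)) (fun a δ => dg₂ (f₂ a) (df₂ a δ))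
      (fun a => dg₁ (f₁ a) (U a) + V (f₂ a)) := by
  constructor
  · intro a
    simp only [Function.comp_apply]
    rw [hU.1 a, hV.1, hC.2, ← hdg₁, ← hU.1 a]
  · intro a δ
    simp only []
    have h1 : dg₁ (f₁ a) (df₁ a δ) + dg₁ (f₁ (actA a δ)) (U (actA a δ))
        = dg₁ (f₁ a) (U a) + dg₁ (f₂ a) (df₂ a δ) := by
      rw [hdf₁, ← hrg₁.2, hU.2, hrg₁.2, ← hU.1]
    have h2 : dg₁ (f₂ a) (df₂ a δ) + V (f₂ (actA a δ))
        = V (f₂ a) + dg₂ (f₂ a) (df₂ a δ) := by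
      rw [hdf₂]; exact hV.2 (f₂ a) (df₂ a δ)
    calc dg₁ (f₁ a) (df₁ a δ) + (dg₁ (f₁ (actA a δ)) (U (actA a δ)) + V (f₂ (actA a δ)))
        = (dg₁ (f₁ a) (df₁ a δ) + dg₁ (f₁ (actA a δ)) (U (actA a δ))) + V (f₂ (actA a δ)) := by
          rw [add_assoc]
      _ = (dg₁ (f₁ a) (U a) + dg₁ (f₂ a) (df₂ a δ)) + V (f₂ (actA a δ)) := by rw [h1]
      _ = dg₁ (f₁ a) (U a) + (dg₁ (f₂ a) (df₂ a δ) + V (f₂ (actA a δ))) := by rw [add_assoc]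
      _ = dg₁ (f₁ a) (U a) + (V (f₂ a) + dg₂ (f₂ a) (df₂ a δ)) := by rw [h2]
      _ = dg₁ (f₁ a) (U a) + V (f₂ a) + dg₂ (f₂ a) (df₂ a δ) := by rw [add_assoc]
end

section
/- Identity laws for pre-ω-differential maps: for every pre-ω-differential map f : A ⇒ B between ω-sequences of types, Id_B ∘ f = f and f ∘ Id_A = f, where Id is the identity pre-ω-differential map and ∘ is composition of pre-ω-differential maps (equality means pointwise equality of the component functions at every index j). -/
universe u

/-- `DSeqAt A i n` is the `n`-th derivative space `(D (Πⁱ A))_n` of the `i`-fold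
shift `Πⁱ A` of the ω-sequence of types `A` (where `(Π A)_k = A (k+1)`), so that
`(D X)_0 = X 0` and `(D X)_{n+1} = (D X)_n × (D (Π X))_n`. -/
def DSeqAt (A : ℕ → Type u) : ℕ → ℕ → Type u
  | i, 0 => A i
  | i, n + 1 => DSeqAt A i n × DSeqAt A (i + 1) n

/-- A pre-ω-differential map `f : A ⇒ B` is a family of maps `f j : (D A)_j → B j`. -/
def PreOmegaMap (A B : ℕ → Type u) : Type u :=
  ∀ j, DSeqAt A 0 j → B j

/-- The structural map `e^j : (D (Πⁱ A))_{m+1} → (D (Πⁱ A))_m`, defined by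
`e^0 = π₁` and `e^{j+1} = e^j × e^j` (meaningful for `j ≤ m`). -/
def eMap (A : ℕ → Type u) : (i j m : ℕ) → DSeqAt A i (m + 1) → DSeqAt A i m
  | _, 0, _ => Prod.fst
  | _, _ + 1, 0 => Prod.fst
  | i, j + 1, m + 1 => fun p => (eMap A i j m p.1, eMap A (i + 1) j m p.2)

/-- The structural map `c^j : (D (Πⁱ A))_j → (Π^{i+j} A)_0 = A (i + j)` (the
instance `m = 0` of `c^j : (D (Πⁱ A))_{m+j} → (D (Π^{i+j} A))_m`), defined by
`c^0 = id` and `c^{j+1} = c^j ∘ π₂`. -/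
def cMap (A : ℕ → Type u) : (i j : ℕ) → DSeqAt A i j → A (i + j)
  | _, 0 => id
  | i, j + 1 => fun p => cast (congrArg A (Nat.succ_add i j)) (cMap A (i + 1) j p.2)

/-- The iterated derivative sequence: `DMap f n j` is `(Dⁿ f)_j : (D A)_{n+j} → (D (Πʲ B))_n`,
defined by `(D⁰ f)_j = f j` and `(D^{n+1} f)_j = ⟨(Dⁿ f)_j ∘ e^j, (Dⁿ f)_{j+1}⟩`. -/
def DMap {A B : ℕ → Type u} (f : PreOmegaMap A B) :
    (n j : ℕ) → DSeqAt A 0 (n + j) → DSeqAt B j n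
  | 0, j => fun p => f j (cast (congrArg (DSeqAt A 0) (Nat.zero_add j)) p)
  | n + 1, j => fun p =>
      let p' : DSeqAt A 0 (n + j + 1) :=
        cast (congrArg (DSeqAt A 0) (Nat.succ_add n j)) p
      (DMap f n j (eMap A 0 j (n + j) p'), DMap f n (j + 1) p')

/-- Composition of pre-ω-differential maps: `(g ∘ f)_j = g_j ∘ (Dʲ f)_0`. -/
def compPre {A B C : ℕ → Type u} (g : PreOmegaMap B C) (f : PreOmegaMap A B) :
    PreOmegaMap A C :=
  fun j p => g j (DMap f j 0 p)

/-- The identity pre-ω-differential map: `Id_j = c^j`. -/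
def idPre (A : ℕ → Type u) : PreOmegaMap A A :=
  fun j p => cast (congrArg A (Nat.zero_add j)) (cMap A 0 j p)

section Helpers

lemma heq_app {T S : ℕ → Type u} (g : ∀ n, T n → S n) {a b : ℕ} (h : a = b)
    {x : T a} {y : T b} (hxy : HEq x y) : HEq (g a x) (g b y) := by
  subst h; rw [eq_of_heq hxy]

lemma prod_heq {α α' β β' : Type u} (hα : α = α') (hβ : β = β')
    {a : α} {a' : α'} {b : β} {b' : β'} (ha : HEq a a') (hb : HEq b b') :
    HEq ((a, b) : α × β) ((a', b') : α' × β') := by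
  subst hα; subst hβ; rw [eq_of_heq ha, eq_of_heq hb]

lemma fst_heq {α α' β β' : Type u} (hα : α = α') (hβ : β = β')
    {p : α × β} {q : α' × β'} (h : HEq p q) : HEq p.1 q.1 := by
  subst hα; subst hβ; rw [eq_of_heq h]

lemma snd_heq {α α' β β' : Type u} (hα : α = α') (hβ : β = β')
    {p : α × β} {q : α' × β'} (h : HEq p q) : HEq p.2 q.2 := by
  subst hα; subst hβ; rw [eq_of_heq h]

end Helpers

/-- Left identity key lemma: `c^n ∘ (Dⁿ f)_j = f (n+j)` up to `HEq`. -/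
lemma cMap_DMap {A B : ℕ → Type u} (f : PreOmegaMap A B) :
    ∀ n j (p : DSeqAt A 0 (n + j)), HEq (cMap B j n (DMap f n j p)) (f (n + j) p) := by
  intro n
  induction n with
  | zero =>
    intro j p
    show HEq (DMap f 0 j p) (f (0 + j) p)
    exact (heq_app f (Nat.zero_add j) (HEq.symm (cast_heq _ _))).symm
  | succ n ih =>
    intro j p
    set p' : DSeqAt A 0 (n + j + 1) :=
      cast (congrArg (DSeqAt A 0) (Nat.succ_add n j)) p with hp'
    show HEq (cast (congrArg B (Nat.succ_add j n))
        (cMap B (j + 1) n (DMap f n (j + 1) p'))) (f (n + 1 + j) p)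
    refine HEq.trans (cast_heq _ _) (HEq.trans (ih (j + 1) p') ?_)
    exact heq_app f (by omega) (cast_heq _ _)

/-- Generalized `c` map `c^j : (D (Πⁱ A))_{m+j} → (D (Π^{i+j} A))_m`. -/
def cMap' (A : ℕ → Type u) : (j i m : ℕ) → DSeqAt A i (m + j) → DSeqAt A (i + j) m
  | 0, _, _ => id
  | j + 1, i, m => fun p =>
      cast (congrArg (fun k => DSeqAt A k m) (Nat.succ_add i j)) (cMap' A j (i + 1) m p.2)

lemma cMap'_zero (A : ℕ → Type u) :
    ∀ j i (p : DSeqAt A i (0 + j)) (q : DSeqAt A i j), HEq p q →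
      HEq (cMap' A j i 0 p) (cMap A i j q) := by
  intro j
  induction j with
  | zero => intro i p q h; exact h
  | succ j ih =>
    intro i p q h
    show HEq (cast _ (cMap' A j (i + 1) 0 p.2)) (cast _ (cMap A (i + 1) j q.2))
    refine HEq.trans (cast_heq _ _) (HEq.trans ?_ (cast_heq _ _).symm)
    exact ih (i + 1) p.2 q.2
      (snd_heq (congrArg (DSeqAt A i) (Nat.zero_add j))
        (congrArg (DSeqAt A (i + 1)) (Nat.zero_add j)) h)

lemma cMap'_succ (A : ℕ → Type u) :
    ∀ j i m (p : DSeqAt A i (m + 1 + j)) (p' : DSeqAt A i (m + j + 1)), HEq p p' →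
      HEq (cMap' A j i (m + 1) p)
        ((cMap' A j i m (eMap A i j (m + j) p'), cMap' A (j + 1) i m p') :
          DSeqAt A (i + j) m × DSeqAt A (i + j + 1) m) := by
  intro j
  induction j with
  | zero =>
    intro i m p p' h
    have hp : p = p' := eq_of_heq h
    subst hp
    refine HEq.trans (show HEq p (p.1, p.2) from HEq.refl p) ?_
    simp only [cMap', eMap]
    refine prod_heq rfl ?_ (HEq.refl _) (cast_heq _ _).symm
    rfl
  | succ j ih =>
    intro i m p p' h
    have h2 : HEq p.2 p'.2 :=
      snd_heq (congrArg (DSeqAt A i) (by first | omega | (simp only [Nat.add_eq]; omega))) (congrArg (DSeqAt A (i+1)) (by first | omega | (simp only [Nat.add_eq]; omega))) h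
    simp only [cMap', eMap]
    refine HEq.trans (cast_heq _ _) ?_
    refine HEq.trans (ih (i + 1) m p.2 p'.2 h2) ?_
    refine prod_heq (congrArg (fun k => DSeqAt A k m) (by first | omega | (simp only [Nat.add_eq]; omega)))
      (congrArg (fun k => DSeqAt A k m) (by first | omega | (simp only [Nat.add_eq]; omega))) ?_ (cast_heq _ _).symm
    exact (cast_heq _ _).symm

/-- Right identity key lemma: `(Dⁿ Id)_j = c'^j` up to `HEq`. -/
lemma DMap_id (A : ℕ → Type u) :
    ∀ n j (p : DSeqAt A 0 (n + j)), HEq (DMap (idPre A) n j p) (cMap' A j 0 n p) := by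
  intro n
  induction n with
  | zero =>
    intro j p
    show HEq (idPre A j (cast (congrArg (DSeqAt A 0) (Nat.zero_add j)) p)) (cMap' A j 0 0 p)
    simp only [idPre]
    refine HEq.trans (cast_heq _ _) ?_
    exact (cMap'_zero A j 0 p _ (cast_heq _ _).symm).symm
  | succ n ih =>
    intro j p
    have hp' : HEq p (cast (congrArg (DSeqAt A 0) (Nat.succ_add n j)) p) :=
      (cast_heq _ _).symm
    simp only [DMap]
    refine HEq.trans ?_ (cMap'_succ A j 0 n p
      (cast (congrArg (DSeqAt A 0) (Nat.succ_add n j)) p) hp').symm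
    exact prod_heq (congrArg (fun k => DSeqAt A k n) (Nat.zero_add j).symm)
      (congrArg (fun k => DSeqAt A k n) (by omega)) (ih j _) (ih (j + 1) _)

/-- Identity laws for pre-ω-differential maps: `Id_B ∘ f = f` and `f ∘ Id_A = f`,
pointwise at every index `j`. -/
theorem preOmega_id_laws {A B : ℕ → Type u} (f : PreOmegaMap A B) :
    (∀ j, compPre (idPre B) f j = f j) ∧ (∀ j, compPre f (idPre A) j = f j) := by
  constructor
  · intro j
    funext p
    show idPre B j (DMap f j 0 p) = f j p
    simp only [idPre]
    exact eq_of_heq (HEq.trans (cast_heq _ _) (cMap_DMap f j 0 p))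
  · intro j
    funext p
    show f j (DMap (idPre A) j 0 p) = f j p
    exact congrArg (f j) (eq_of_heq (DMap_id A j 0 p))
end

section
/- Associativity of composition of pre-ω-differential maps: for pre-ω-differential maps f : A ⇒ B, g : B ⇒ C, h : C ⇒ D between ω-sequences of types and every n : ℕ, ((h ∘ g) ∘ f)_n = (h ∘ (g ∘ f))_n, i.e. (h_n ∘ (D^n g)_0) ∘ (D^n f)_0 = h_n ∘ (D^n (g ∘ f))_0. -/
universe u

-- eMap at level 0 is always fst
theorem eMap_zero (A : ℕ → Type u) (i j : ℕ) (p : DSeqAt A i 1) :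
    eMap A i j 0 p = p.1 := by
  cases j <;> rfl

-- e-commutation
theorem ecomm (A : ℕ → Type u) :
    ∀ (b d i m : ℕ) (p : DSeqAt A i (m + 2)),
      eMap A i (b + d) m (eMap A i b (m + 1) p)
        = eMap A i b m (eMap A i (b + d + 1) (m + 1) p)
  | 0, d, i, m, p => by
      rw [Nat.zero_add]
      show eMap A i d m p.1 = (eMap A i (d + 1) (m + 1) p).1
      rfl
  | b + 1, d, i, 0, p => by
      rw [show b + 1 + d = (b + d) + 1 from by omega]
      show eMap A i (b + d + 1) 0 (eMap A i (b + 1) 1 p)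
          = (eMap A i (b + d + 1 + 1) 1 p).1
      rw [show eMap A i (b+1) 1 p = (eMap A i b 0 p.1, eMap A (i+1) b 0 p.2) from rfl]
      rw [show eMap A i (b+d+1+1) 1 p = (eMap A i (b+d+1) 0 p.1, eMap A (i+1) (b+d+1) 0 p.2) from rfl]
      show eMap A i b 0 p.1 = eMap A i (b+d+1) 0 p.1
      rw [eMap_zero, eMap_zero]
  | b + 1, d, i, m + 1, p => by
      rw [show b + 1 + d = (b + d) + 1 from by omega]
      show ((eMap A i (b+d) m ((eMap A i (b+1) (m+2) p).1),
             eMap A (i+1) (b+d) m ((eMap A i (b+1) (m+2) p).2)) : DSeqAt A i (m+1))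
          = (eMap A i b m ((eMap A i (b+d+1+1) (m+2) p).1),
             eMap A (i+1) b m ((eMap A i (b+d+1+1) (m+2) p).2))
      rw [show eMap A i (b+1) (m+2) p = (eMap A i b (m+1) p.1, eMap A (i+1) b (m+1) p.2) from rfl]
      rw [show eMap A i (b+d+1+1) (m+2) p
            = (eMap A i (b+d+1) (m+1) p.1, eMap A (i+1) (b+d+1) (m+1) p.2) from rfl]
      show (eMap A i (b+d) m (eMap A i b (m+1) p.1),
            eMap A (i+1) (b+d) m (eMap A (i+1) b (m+1) p.2))
         = (eMap A i b m (eMap A i (b+d+1) (m+1) p.1),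
            eMap A (i+1) b m (eMap A (i+1) (b+d+1) (m+1) p.2))
      rw [ecomm A b d i m p.1, ecomm A b d (i+1) m p.2]

-- cast commutation lemmas
theorem eMap_cast (A : ℕ → Type u) (i j : ℕ) {m m' : ℕ} (e : m = m')
    (p : DSeqAt A i (m + 1)) :
    eMap A i j m' (cast (congrArg (fun x => DSeqAt A i (x + 1)) e) p)
      = cast (congrArg (DSeqAt A i) e) (eMap A i j m p) := by
  subst e; rfl

theorem DMap_cast {A B : ℕ → Type u} (f : PreOmegaMap A B) (k : ℕ) {a b : ℕ}
    (e : a = b) (p : DSeqAt A 0 (a + k)) :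
    DMap f b k (cast (congrArg (fun x => DSeqAt A 0 (x + k)) e) p)
      = cast (congrArg (fun x => DSeqAt B k x) e) (DMap f a k p) := by
  subst e; rfl

theorem cast_eq_cast {α β : Type u} (h h' : α = β) (a : α) : cast h a = cast h' a := rfl

theorem eMap_DMap {A B : ℕ → Type u} (f : PreOmegaMap A B) :
    ∀ (j m k : ℕ), j ≤ m → ∀ (p : DSeqAt A 0 (m + 1 + k)),
      eMap B k j m (DMap f (m + 1) k p)
        = DMap f m k (eMap A 0 (j + k) (m + k)
            (cast (congrArg (DSeqAt A 0) (Nat.succ_add m k)) p)) := by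
  intro j
  induction j with
  | zero =>
      intro m k _ p
      rw [Nat.zero_add]
      show (DMap f (m + 1) k p).1 = _
      rfl
  | succ j ih =>
      intro m k hj p
      obtain ⟨m', rfl⟩ : ∃ m', m = m' + 1 := ⟨m - 1, by omega⟩
      have hj' : j ≤ m' := by omega
      set p₁ : DSeqAt A 0 (m' + 1 + k + 1) :=
        cast (congrArg (DSeqAt A 0) (Nat.succ_add (m' + 1) k)) p with hp₁
      show eMap B k (j + 1) (m' + 1)
            (DMap f (m' + 1) k (eMap A 0 k (m' + 1 + k) p₁), DMap f (m' + 1) (k + 1) p₁)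
          = DMap f (m' + 1) k (eMap A 0 (j + 1 + k) (m' + 1 + k) p₁)
      set X : DSeqAt A 0 (m' + 1 + k) := eMap A 0 (j + 1 + k) (m' + 1 + k) p₁ with hX
      show (eMap B k j m' (DMap f (m' + 1) k (eMap A 0 k (m' + 1 + k) p₁)),
            eMap B (k + 1) j m' (DMap f (m' + 1) (k + 1) p₁))
          = (DMap f m' k (eMap A 0 k (m' + k)
              (cast (congrArg (DSeqAt A 0) (Nat.succ_add m' k)) X)),
             DMap f m' (k + 1) (cast (congrArg (DSeqAt A 0) (Nat.succ_add m' k)) X))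
      rw [ih m' k hj' (eMap A 0 k (m' + 1 + k) p₁), ih m' (k + 1) hj' p₁]
      rw [hX, ← eMap_cast A 0 (j + 1 + k) (Nat.succ_add m' k) p₁,
          ← eMap_cast A 0 k (Nat.succ_add m' k) p₁]
      set P₂ : DSeqAt A 0 (m' + k + 1 + 1) :=
        cast (congrArg (fun x => DSeqAt A 0 (x + 1)) (Nat.succ_add m' k)) p₁ with hP₂
      rw [show j + k = k + j from by omega, show j + 1 + k = k + j + 1 from by omega,
          show j + (k + 1) = k + j + 1 from by omega]
      rw [ecomm A k j 0 (m' + k) P₂]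
      exact Prod.ext rfl (congrArg (DMap f m' (k + 1)) (by rfl))

theorem DMap_comp {A B C : ℕ → Type u} (f : PreOmegaMap A B) (g : PreOmegaMap B C) :
    ∀ (n j : ℕ) (p : DSeqAt A 0 (n + j)),
      DMap (compPre g f) n j p = DMap g n j (DMap f (n + j) 0 p) := by
  intro n
  induction n with
  | zero =>
      intro j p
      show g j (DMap f j 0 (cast (congrArg (DSeqAt A 0) (Nat.zero_add j)) p))
          = g j (cast (congrArg (DSeqAt B 0) (Nat.zero_add j)) (DMap f (0 + j) 0 p))
      exact congrArg (g j) (DMap_cast f 0 (Nat.zero_add j) p)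
  | succ n ih =>
      intro j p
      set p₁ : DSeqAt A 0 (n + j + 1) :=
        cast (congrArg (DSeqAt A 0) (Nat.succ_add n j)) p with hp₁
      set Q₁ : DSeqAt B 0 (n + j + 1) :=
        cast (congrArg (DSeqAt B 0) (Nat.succ_add n j)) (DMap f (n + 1 + j) 0 p) with hQ₁
      show (DMap (compPre g f) n j (eMap A 0 j (n + j) p₁), DMap (compPre g f) n (j + 1) p₁)
          = (DMap g n j (eMap B 0 j (n + j) Q₁), DMap g n (j + 1) Q₁)
      have hQ : Q₁ = DMap f (n + j + 1) 0 p₁ := (DMap_cast f 0 (Nat.succ_add n j) p).symm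
      rw [ih j (eMap A 0 j (n + j) p₁), ih (j + 1) p₁, hQ]
      refine Prod.ext ?_ rfl
      show DMap g n j (DMap f (n + j) 0 (eMap A 0 j (n + j) p₁))
          = DMap g n j (eMap B 0 j (n + j) (DMap f (n + j + 1) 0 p₁))
      rw [eMap_DMap f j (n + j) 0 (by omega) p₁]
      rfl


/-- Associativity of composition of pre-ω-differential maps:
`((h ∘ g) ∘ f)_n = (h ∘ (g ∘ f))_n`, i.e.
`(h_n ∘ (Dⁿ g)_0) ∘ (Dⁿ f)_0 = h_n ∘ (Dⁿ (g ∘ f))_0`. -/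
theorem preOmega_comp_assoc {A B C D : ℕ → Type u}
    (f : PreOmegaMap A B) (g : PreOmegaMap B C) (h : PreOmegaMap C D) (n : ℕ) :
    compPre (compPre h g) f n = compPre h (compPre g f) n := by
  funext p
  show h n (DMap g n 0 (DMap f n 0 p)) = h n (DMap (compPre g f) n 0 p)
  rw [DMap_comp f g n 0 p]
  rfl
end
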